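/- Let a > 0, m > 0, x₀ > 0 and β = α > 0. Let A = {(x,y) : 0 < x < x₀, 0 < y < x^m} and h(x,y) = a·x^α·y^β. Then there exist constants c, C > 0 such that for all sufficiently small ε > 0: c·ε^(1/β)·|log ε| < |{(x,y) ∈ A : |h(x,y)| < ε}| < C·ε^(1/β)·|log ε|. -/
import Mathlib

open MeasureTheory Set

/-- Lemma 2.3 b): for `β = α > 0`, the area of the sublevel set of `h(x,y) = a x^β y^β`
on the curved triangle `{0 < x < x₀, 0 < y < x^m}` is comparable to
`ε^(1/β) * |log ε|` for small `ε`. -/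
theorem monomial_sublevel_beta_eq_alpha
    (a m x₀ β : ℝ) (ha : 0 < a) (hm : 0 < m) (hx₀ : 0 < x₀) (hβ : 0 < β) :
    ∃ c C : ℝ, 0 < c ∧ 0 < C ∧ ∃ ε₀ > 0, ∀ ε : ℝ, 0 < ε → ε < ε₀ →
      c * ε ^ (1 / β) * |Real.log ε| <
        (volume {p : ℝ × ℝ | (0 < p.1 ∧ p.1 < x₀ ∧ 0 < p.2 ∧ p.2 < p.1 ^ m) ∧
          |a * p.1 ^ β * p.2 ^ β| < ε}).toReal ∧
      (volume {p : ℝ × ℝ | (0 < p.1 ∧ p.1 < x₀ ∧ 0 < p.2 ∧ p.2 < p.1 ^ m) ∧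
          |a * p.1 ^ β * p.2 ^ β| < ε}).toReal <
        C * ε ^ (1 / β) * |Real.log ε| := by
  have hm1 : (0:ℝ) < m + 1 := by linarith
  set D : ℝ := β * (m + 1) with hDdef
  have hDpos : 0 < D := by positivity
  set A0 : ℝ := a ^ (1/β) with hA0def
  have hA0pos : 0 < A0 := Real.rpow_pos_of_pos ha _
  set K : ℝ := 1/(m+1) + Real.log x₀ + Real.log a / D with hKdef
  set M : ℝ := 2*D*|K| + |K| + 2 with hMdef
  have hMpos : 0 < M := by positivity
  refine ⟨1/(A0*(2*D)), (1 + 1/D)/A0, by positivity, by positivity,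
    min (Real.exp (-M)) (a * x₀ ^ ((m+1)*β)), lt_min (Real.exp_pos _) (by positivity), ?_⟩
  intro ε hε hεlt
  have hεexp : ε < Real.exp (-M) := lt_of_lt_of_le hεlt (min_le_left _ _)
  have hεax : ε < a * x₀ ^ ((m+1)*β) := lt_of_lt_of_le hεlt (min_le_right _ _)
  have hε1 : ε < 1 := hεexp.trans (Real.exp_lt_one_iff.mpr (by linarith))
  set Lε : ℝ := -Real.log ε with hLdef
  have hLM : M < Lε := by
    have h := Real.log_lt_log hε hεexp
    rw [Real.log_exp] at h
    simp only [hLdef]; linarith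
  have habs : |Real.log ε| = Lε := abs_of_neg (Real.log_neg hε hε1)
  set t : ℝ := (ε/a) ^ (1/β) with htdef
  have ht : 0 < t := Real.rpow_pos_of_pos (div_pos hε ha) _
  set s : ℝ := t ^ (1/(m+1)) with hsdef
  have hspos : 0 < s := Real.rpow_pos_of_pos ht _
  have hst : s ^ (m+1) = t := by
    rw [hsdef, ← Real.rpow_mul ht.le, one_div_mul_cancel hm1.ne', Real.rpow_one]
  -- s < x₀
  have htx : t < x₀ ^ (m+1) := by
    have h1 : ε / a < x₀ ^ ((m+1)*β) := (div_lt_iff₀' ha).mpr hεax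
    have h2 : t < (x₀ ^ ((m+1)*β)) ^ (1/β) :=
      Real.rpow_lt_rpow (div_pos hε ha).le h1 (by positivity)
    calc t < (x₀ ^ ((m+1)*β)) ^ (1/β) := h2
      _ = x₀ ^ ((m+1)*β*(1/β)) := by rw [← Real.rpow_mul hx₀.le]
      _ = x₀ ^ (m+1) := by rw [mul_assoc, mul_one_div_cancel hβ.ne', mul_one]
  have hsx₀ : s < x₀ := by
    have h2 : s < (x₀ ^ (m+1)) ^ (1/(m+1)) := Real.rpow_lt_rpow ht.le htx (by positivity)
    calc s < (x₀ ^ (m+1)) ^ (1/(m+1)) := h2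
      _ = x₀ ^ ((m+1)*(1/(m+1))) := by rw [← Real.rpow_mul hx₀.le]
      _ = x₀ := by rw [mul_one_div_cancel hm1.ne', Real.rpow_one]
  -- the upper boundary function
  set g : ℝ → ℝ := fun x => min (x ^ m) (t * x⁻¹) with hgdef
  -- set identification
  have key : ∀ x y : ℝ, 0 < x → 0 < y → (|a * x ^ β * y ^ β| < ε ↔ y < t * x⁻¹) := by
    intro x y hx hy
    have hxb : (0:ℝ) < x ^ β := Real.rpow_pos_of_pos hx _
    have hyb : (0:ℝ) < y ^ β := Real.rpow_pos_of_pos hy _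
    rw [abs_of_pos (by positivity)]
    have h1 : a * x ^ β * y ^ β = (x*y) ^ β * a := by
      rw [Real.mul_rpow hx.le hy.le]; ring
    rw [h1, ← lt_div_iff₀ ha, ← Real.lt_rpow_inv_iff_of_pos (by positivity)
      (div_pos hε ha).le hβ, ← one_div, ← htdef, mul_comm x y, ← lt_div_iff₀ hx,
      div_eq_mul_inv]
  have hset : {p : ℝ × ℝ | (0 < p.1 ∧ p.1 < x₀ ∧ 0 < p.2 ∧ p.2 < p.1 ^ m) ∧
      |a * p.1 ^ β * p.2 ^ β| < ε} = regionBetween (fun _ => (0:ℝ)) g (Ioo 0 x₀) := by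
    ext p
    simp only [regionBetween, mem_setOf_eq, mem_Ioo, lt_min_iff, hgdef]
    constructor
    · rintro ⟨⟨hx, hxx, hy, hym⟩, hh⟩
      exact ⟨⟨hx, hxx⟩, hy, hym, (key _ _ hx hy).mp hh⟩
    · rintro ⟨⟨hx, hxx⟩, hy, hym, hti⟩
      exact ⟨⟨hx, hxx, hy, hym⟩, (key _ _ hx hy).mpr hti⟩
  -- measurability / integrability
  have hgmeas : Measurable g := by
    apply Measurable.min
    · exact (Real.continuous_rpow_const hm.le).measurable
    · exact measurable_const.mul measurable_inv
  have hgle : ∀ x ∈ Ioc (0:ℝ) x₀, ‖g x‖ ≤ x₀ ^ m := by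
    intro x hx
    have hxm : (0:ℝ) ≤ x ^ m := Real.rpow_nonneg hx.1.le _
    have htn : (0:ℝ) ≤ t * x⁻¹ := mul_nonneg ht.le (inv_nonneg.mpr hx.1.le)
    rw [Real.norm_eq_abs, abs_of_nonneg (le_min hxm htn)]
    exact (min_le_left _ _).trans (Real.rpow_le_rpow hx.1.le hx.2 hm.le)
  have hgint : IntegrableOn g (Ioc 0 x₀) volume := by
    apply Measure.integrableOn_of_bounded (measure_Ioc_lt_top).ne
      hgmeas.aestronglyMeasurable
    exact (ae_restrict_iff' measurableSet_Ioc).mpr (Filter.Eventually.of_forall hgle)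
  have hgintO : IntegrableOn g (Ioo 0 x₀) volume := hgint.mono_set Ioo_subset_Ioc_self
  -- volume as an integral
  have hvol : volume {p : ℝ × ℝ | (0 < p.1 ∧ p.1 < x₀ ∧ 0 < p.2 ∧ p.2 < p.1 ^ m) ∧
      |a * p.1 ^ β * p.2 ^ β| < ε} = ENNReal.ofReal (∫ x in Ioo 0 x₀, g x) := by
    rw [hset, Measure.volume_eq_prod, volume_regionBetween_eq_integral
      (integrableOn_zero) hgintO measurableSet_Ioo
      (fun x hx => le_min (Real.rpow_nonneg hx.1.le _) (mul_nonneg ht.le (inv_nonneg.mpr hx.1.le)))]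
    congr 1
    apply setIntegral_congr_fun measurableSet_Ioo
    intro x _
    simp
  -- compute the integral
  have hg1 : IntervalIntegrable g volume 0 s := by
    rw [intervalIntegrable_iff_integrableOn_Ioc_of_le hspos.le]
    exact hgint.mono_set (Ioc_subset_Ioc le_rfl hsx₀.le)
  have hg2 : IntervalIntegrable g volume s x₀ := by
    rw [intervalIntegrable_iff_integrableOn_Ioc_of_le hsx₀.le]
    exact hgint.mono_set (Ioc_subset_Ioc hspos.le le_rfl)
  have p1 : ∫ x in (0:ℝ)..s, g x = ∫ x in (0:ℝ)..s, x ^ m := by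
    apply intervalIntegral.integral_congr
    intro x hx
    rw [uIcc_of_le hspos.le] at hx
    rcases eq_or_lt_of_le hx.1 with h0 | h0
    · simp [hgdef, ← h0, Real.zero_rpow hm.ne']
    · apply min_eq_left
      rw [← div_eq_mul_inv, le_div_iff₀ h0]
      have e : x ^ m * x = x ^ (m+1) := by
        nth_rewrite 2 [← Real.rpow_one x]
        rw [← Real.rpow_add h0]
      rw [e, ← hst]
      exact Real.rpow_le_rpow h0.le hx.2 hm1.le
  have p1v : ∫ x in (0:ℝ)..s, x ^ m = t / (m+1) := by
    rw [integral_rpow (Or.inl (by linarith : (-1:ℝ) < m)),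
      Real.zero_rpow (by positivity : m + 1 ≠ 0), hst, sub_zero]
  have p2 : ∫ x in s..x₀, g x = ∫ x in s..x₀, t * x⁻¹ := by
    apply intervalIntegral.integral_congr
    intro x hx
    rw [uIcc_of_le hsx₀.le] at hx
    have hxp : 0 < x := hspos.trans_le hx.1
    apply min_eq_right
    rw [← div_eq_mul_inv, div_le_iff₀ hxp]
    have e : x ^ m * x = x ^ (m+1) := by
      nth_rewrite 2 [← Real.rpow_one x]
      rw [← Real.rpow_add hxp]
    rw [e, ← hst]
    exact Real.rpow_le_rpow hspos.le hx.1 hm1.le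
  have p2v : ∫ x in s..x₀, t * x⁻¹ = t * (Real.log x₀ - Real.log s) := by
    rw [intervalIntegral.integral_const_mul, integral_inv
      (fun h => absurd ((uIcc_of_le hsx₀.le ▸ h).1) (not_le.mpr hspos)),
      Real.log_div hx₀.ne' hspos.ne']
  have hlogs : Real.log s = (Real.log ε - Real.log a) / D := by
    rw [hsdef, Real.log_rpow ht, htdef, Real.log_rpow (div_pos hε ha),
      Real.log_div hε.ne' ha.ne', hDdef, one_div, one_div, inv_mul_eq_div,
      inv_mul_eq_div, div_div]
  set R : ℝ := 1/(m+1) + Real.log x₀ - (Real.log ε - Real.log a) / D with hRdef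
  have hI : ∫ x in Ioo 0 x₀, g x = t * R := by
    rw [← integral_Ioc_eq_integral_Ioo, ← intervalIntegral.integral_of_le hx₀.le,
      ← intervalIntegral.integral_add_adjacent_intervals hg1 hg2,
      p1, p1v, p2, p2v, hlogs, hRdef]
    ring
  have hRK : R = K + Lε / D := by
    rw [hRdef, hKdef, hLdef]
    ring
  clear_value D A0 K M Lε t s R
  have hKabs1 : -|K| ≤ K := neg_abs_le K
  have hKabs2 : K ≤ |K| := le_abs_self K
  have hLMe : 2*D*|K| + |K| + 2 < Lε := by rw [hMdef] at hLM; exact hLM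
  have hDK : 2*D*(-|K|) ≤ 2*D*K := by
    apply mul_le_mul_of_nonneg_left hKabs1 (by positivity)
  have hRlow : Lε / (2*D) < R := by
    rw [hRK, div_lt_iff₀ (by positivity : (0:ℝ) < 2*D)]
    have e : (K + Lε/D) * (2*D) = 2*D*K + 2*Lε := by
      linear_combination (2:ℝ) * div_mul_cancel₀ Lε hDpos.ne'
    rw [e]
    linarith [hDK, hLMe, abs_nonneg K]
  have hRhigh : R < (1 + 1/D) * Lε := by
    rw [hRK]
    have e : (1 + 1/D) * Lε = Lε + Lε/D := by ring
    rw [e]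
    have hK : K < Lε := by
      have h0 : (0:ℝ) ≤ 2*D*|K| := mul_nonneg (by positivity) (abs_nonneg K)
      linarith
    linarith
  have hLpos : 0 < Lε := hMpos.trans hLM
  have hRpos : 0 < R := (div_pos hLpos (by linarith : (0:ℝ) < 2*D)).trans hRlow
  have htEA : t = ε ^ (1/β) / A0 := by
    rw [htdef, Real.div_rpow hε.le ha.le, hA0def]
  have hE : (0:ℝ) < ε ^ (1/β) := Real.rpow_pos_of_pos hε _
  rw [hvol, ENNReal.toReal_ofReal (by rw [hI]; exact (mul_pos ht hRpos).le), hI, habs, htEA]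
  constructor
  · have e1 : 1/(A0*(2*D)) * ε ^ (1/β) * Lε = ε ^ (1/β)/A0 * (Lε/(2*D)) := by
      ring
    rw [e1]
    exact mul_lt_mul_of_pos_left hRlow (div_pos hE hA0pos)
  · have e2 : (1 + 1/D)/A0 * ε ^ (1/β) * Lε = ε ^ (1/β)/A0 * ((1 + 1/D) * Lε) := by
      ring
    rw [e2]
    exact mul_lt_mul_of_pos_left hRhigh (div_pos hE hA0pos)
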